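/- Let V be a non-singular orthogonal geometry over a field F of characteristic ≠ 2. Every element x of the Clifford group Γ(V) is homogeneous with respect to the ℤ/2ℤ-grading of C(V): either x' = x (x lies in the even part C⁰(V)) or x' = −x (x lies in the odd part C¹(V)). Hence Γ(V) is the disjoint union of Γ⁰(V) = Γ(V) ∩ C⁰(V) and Γ¹(V) = Γ(V) ∩ C¹(V). -/

import Mathlib

open CliffordAlgebra

section Aux

variable {F : Type*} [Field F] {V : Type*} [AddCommGroup V] [Module F V]
variable {Q : QuadraticForm F V}

/-- The contraction is a twisted derivation for the Clifford product. -/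
private lemma contract_mul (d : Module.Dual F V) (x y : CliffordAlgebra Q) :
    contractLeft (Q := Q) d (x * y) =
      contractLeft (Q := Q) d x * y + involute x * contractLeft (Q := Q) d y := by
  induction x using CliffordAlgebra.induction generalizing y with
  | algebraMap r =>
      simp only [contractLeft_algebraMap_mul, contractLeft_algebraMap, zero_mul, zero_add,
        AlgHom.commutes, Algebra.smul_def]
  | ι v =>
      rw [contractLeft_ι_mul, contractLeft_ι, involute_ι, Algebra.smul_def, sub_eq_add_neg,
        neg_mul]
  | mul a b ha hb =>
      rw [mul_assoc, ha, hb, ha b,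
        show involute (a * b) = involute a * involute b from map_mul _ a b]
      noncomm_ring
  | add a b ha hb =>
      rw [add_mul, map_add, ha, hb,
        show involute (a + b) = involute a + involute b from map_add _ a b,
        LinearMap.map_add]
      noncomm_ring

/-- Contraction by a dual vector vanishing on `s` kills the subalgebra generated by `ι '' s`. -/
private lemma contract_adjoin_zero (d : Module.Dual F V) (s : Set V)
    (hd : ∀ w ∈ s, d w = 0) {x : CliffordAlgebra Q}
    (hx : x ∈ Algebra.adjoin F (ι Q '' s)) :
    contractLeft (Q := Q) d x = 0 := by
  induction hx using Algebra.adjoin_induction with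
  | mem y hy =>
      obtain ⟨w, hw, rfl⟩ := hy
      rw [contractLeft_ι, hd w hw, map_zero]
  | algebraMap r => exact contractLeft_algebraMap _ _ _
  | add x y hx hy ihx ihy => rw [map_add, ihx, ihy, add_zero]
  | mul x y hx hy ihx ihy => rw [contract_mul, ihx, ihy, zero_mul, mul_zero, add_zero]

/-- The subalgebra generated by `ι '' s` is stable under the principal involution. -/
private lemma involute_adjoin (s : Set V) {x : CliffordAlgebra Q}
    (hx : x ∈ Algebra.adjoin F (ι Q '' s)) :
    involute x ∈ Algebra.adjoin F (ι Q '' s) := by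
  induction hx using Algebra.adjoin_induction with
  | mem y hy =>
      obtain ⟨w, hw, rfl⟩ := hy
      rw [involute_ι]
      exact neg_mem (Algebra.subset_adjoin ⟨w, hw, rfl⟩)
  | algebraMap r => rw [AlgHom.commutes]; exact algebraMap_mem _ r
  | add x y hx hy ihx ihy => rw [map_add]; exact add_mem ihx ihy
  | mul x y hx hy ihx ihy => rw [map_mul]; exact mul_mem ihx ihy

/-- The fundamental identity `ι v * x = involute x * ι v - 2 (S v ⌋ x)`. -/
private lemma iota_mul_eq (S : LinearMap.BilinForm F V) (hS : ∀ x y, S x y = S y x)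
    (hQ : ∀ v, Q v = -(S v v)) (v : V) (x : CliffordAlgebra Q) :
    ι Q v * x = involute x * ι Q v + (-2 : F) • contractLeft (Q := Q) (S v) x := by
  induction x using CliffordAlgebra.induction with
  | algebraMap r =>
      rw [contractLeft_algebraMap, smul_zero, add_zero, AlgHom.commutes, Algebra.commutes]
  | ι w =>
      have hpol : QuadraticMap.polar Q v w = -2 * S v w := by
        simp only [QuadraticMap.polar, hQ, map_add, LinearMap.add_apply]
        rw [hS w v]; ring
      have hsm : (-2 : F) • algebraMap F (CliffordAlgebra Q) (S v w)
          = algebraMap F (CliffordAlgebra Q) (-2 * S v w) := by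
        rw [Algebra.smul_def, ← map_mul]
      rw [involute_ι, contractLeft_ι, ι_mul_ι_comm, hpol, hsm]
      noncomm_ring
  | mul a b ha hb =>
      calc ι Q v * (a * b) = (ι Q v * a) * b := (mul_assoc _ _ _).symm
        _ = (involute a * ι Q v + (-2 : F) • contractLeft (Q := Q) (S v) a) * b := by rw [ha]
        _ = involute a * (ι Q v * b) + (-2 : F) • (contractLeft (Q := Q) (S v) a * b) := by
              rw [add_mul, smul_mul_assoc, mul_assoc]
        _ = involute a * (involute b * ι Q v + (-2 : F) • contractLeft (Q := Q) (S v) b)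
              + (-2 : F) • (contractLeft (Q := Q) (S v) a * b) := by rw [hb]
        _ = involute (a * b) * ι Q v
              + (-2 : F) • (contractLeft (Q := Q) (S v) a * b
                  + involute a * contractLeft (Q := Q) (S v) b) := by
              rw [mul_add, ← mul_assoc, ← map_mul, mul_smul_comm, smul_add, add_assoc,
                add_comm ((-2 : F) • (involute a * contractLeft (Q := Q) (S v) b))]
        _ = involute (a * b) * ι Q v + (-2 : F) • contractLeft (Q := Q) (S v) (a * b) := by
              rw [contract_mul]
  | add a b ha hb =>
      rw [mul_add, ha, hb, map_add, map_add, add_mul, smul_add]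
      abel

/-- Every element lies in the subalgebra generated by the images of a basis. -/
private lemma mem_adjoin_range {n : ℕ} (b : Module.Basis (Fin n) F V) (x : CliffordAlgebra Q) :
    x ∈ Algebra.adjoin F (ι Q '' Set.range b) := by
  induction x using CliffordAlgebra.induction with
  | algebraMap r => exact algebraMap_mem _ r
  | ι v =>
      have hv : v ∈ Submodule.span F (Set.range b) := by rw [b.span_eq]; trivial
      have h2 : ι Q v ∈ Submodule.span F (ι Q '' Set.range b) := by
        rw [← Submodule.map_span]
        exact Submodule.mem_map_of_mem hv
      exact Algebra.span_le_adjoin F _ h2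
  | mul a b ha hb => exact mul_mem ha hb
  | add a b ha hb => exact add_mem ha hb

/-- Peeling off one orthogonal basis vector. -/
private lemma decomp (S : LinearMap.BilinForm F V) (hS : ∀ x y, S x y = S y x)
    (hQ : ∀ v, Q v = -(S v v)) {n : ℕ} (b : Module.Basis (Fin n) F V)
    (hb : ∀ i j : Fin n, i ≠ j → S (b i) (b j) = 0) (k : Fin n)
    {x : CliffordAlgebra Q}
    (hx : x ∈ Algebra.adjoin F (ι Q '' (b '' {j | k ≤ j}))) :
    ∃ a ∈ Algebra.adjoin F (ι Q '' (b '' {j | k < j})),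
      ∃ c ∈ Algebra.adjoin F (ι Q '' (b '' {j | k < j})),
        x = a + ι Q (b k) * c := by
  have horth : ∀ w ∈ (b '' {j | k < j} : Set V), S (b k) w = 0 := by
    rintro w ⟨j, hj, rfl⟩
    exact hb k j (ne_of_lt hj)
  have hcomm : ∀ t ∈ Algebra.adjoin F (ι Q '' (b '' {j | k < j})),
      ι Q (b k) * t = involute t * ι Q (b k) := by
    intro t ht
    rw [iota_mul_eq S hS hQ, contract_adjoin_zero _ _ horth ht, smul_zero, add_zero]
  induction hx using Algebra.adjoin_induction with
  | mem y hy =>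
      obtain ⟨w, hw, rfl⟩ := hy
      obtain ⟨j, hj, rfl⟩ := hw
      rcases eq_or_lt_of_le (show k ≤ j from hj) with heq | hlt
      · refine ⟨0, zero_mem _, 1, one_mem _, ?_⟩
        rw [heq, mul_one, zero_add]
      · exact ⟨ι Q (b j), Algebra.subset_adjoin ⟨b j, ⟨j, hlt, rfl⟩, rfl⟩, 0, zero_mem _,
          by rw [mul_zero, add_zero]⟩
  | algebraMap r =>
      exact ⟨algebraMap F _ r, algebraMap_mem _ r, 0, zero_mem _, by rw [mul_zero, add_zero]⟩
  | add x y hx hy ihx ihy =>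
      obtain ⟨a₁, ha₁, c₁, hc₁, rfl⟩ := ihx
      obtain ⟨a₂, ha₂, c₂, hc₂, rfl⟩ := ihy
      exact ⟨a₁ + a₂, add_mem ha₁ ha₂, c₁ + c₂, add_mem hc₁ hc₂, by rw [mul_add]; abel⟩
  | mul x y hx hy ihx ihy =>
      obtain ⟨a₁, ha₁, c₁, hc₁, rfl⟩ := ihx
      obtain ⟨a₂, ha₂, c₂, hc₂, rfl⟩ := ihy
      have hai : a₁ * ι Q (b k) = ι Q (b k) * involute a₁ := by
        rw [hcomm _ (involute_adjoin _ ha₁), involute_involute]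
      have hci : c₁ * ι Q (b k) = ι Q (b k) * involute c₁ := by
        rw [hcomm _ (involute_adjoin _ hc₁), involute_involute]
      refine ⟨a₁ * a₂ + Q (b k) • (involute c₁ * c₂),
        add_mem (mul_mem ha₁ ha₂)
          (Subalgebra.smul_mem _ (mul_mem (involute_adjoin _ hc₁) hc₂) _),
        involute a₁ * c₂ + c₁ * a₂,
        add_mem (mul_mem (involute_adjoin _ ha₁) hc₂) (mul_mem hc₁ ha₂), ?_⟩
      have h1 : a₁ * (ι Q (b k) * c₂) = ι Q (b k) * (involute a₁ * c₂) := by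
        rw [← mul_assoc, hai, mul_assoc]
      have h2 : (ι Q (b k) * c₁) * (ι Q (b k) * c₂)
          = Q (b k) • (involute c₁ * c₂) := by
        calc (ι Q (b k) * c₁) * (ι Q (b k) * c₂)
            = ι Q (b k) * ((c₁ * ι Q (b k)) * c₂) := by noncomm_ring
          _ = ι Q (b k) * ((ι Q (b k) * involute c₁) * c₂) := by rw [hci]
          _ = (ι Q (b k) * ι Q (b k)) * (involute c₁ * c₂) := by noncomm_ring
          _ = Q (b k) • (involute c₁ * c₂) := by rw [ι_sq_scalar, Algebra.smul_def]
      calc (a₁ + ι Q (b k) * c₁) * (a₂ + ι Q (b k) * c₂)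
          = a₁ * a₂ + a₁ * (ι Q (b k) * c₂) + ((ι Q (b k) * c₁) * a₂
              + (ι Q (b k) * c₁) * (ι Q (b k) * c₂)) := by noncomm_ring
        _ = a₁ * a₂ + ι Q (b k) * (involute a₁ * c₂) + (ι Q (b k) * (c₁ * a₂)
              + Q (b k) • (involute c₁ * c₂)) := by rw [h1, h2, mul_assoc]
        _ = a₁ * a₂ + Q (b k) • (involute c₁ * c₂)
              + ι Q (b k) * (involute a₁ * c₂ + c₁ * a₂) := by
            rw [mul_add]; abel

/-- An element all of whose contractions `S v ⌋ x` vanish is a scalar. -/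
private lemma scalar_of_contract [FiniteDimensional F V]
    (hchar : (2 : F) ≠ 0) (S : LinearMap.BilinForm F V) (hS : ∀ x y, S x y = S y x)
    (hnd : ∀ x : V, (∀ y : V, S x y = 0) → x = 0)
    (hQ : ∀ v, Q v = -(S v v)) {x : CliffordAlgebra Q}
    (hx : ∀ v, contractLeft (Q := Q) (S v) x = 0) :
    ∃ r : F, x = algebraMap F (CliffordAlgebra Q) r := by
  letI : Invertible (2 : F) := invertibleOfNonzero hchar
  obtain ⟨n, b, hbo⟩ : ∃ (n : ℕ) (b : Module.Basis (Fin n) F V),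
      ∀ i j, i ≠ j → S (b i) (b j) = 0 := by
    obtain ⟨b, hb⟩ := LinearMap.BilinForm.exists_orthogonal_basis
      (B := S) (LinearMap.isSymm_def.mpr (fun x y => hS x y))
    exact ⟨_, b, fun i j hij => LinearMap.isOrthoᵢ_def.mp hb i j hij⟩
  -- the empty case
  have empty_case : ∀ m : ℕ, n ≤ m → ∀ y : CliffordAlgebra Q,
      y ∈ Algebra.adjoin F (ι Q '' (b '' {j : Fin n | m ≤ (j : ℕ)})) →
      ∃ r : F, y = algebraMap F (CliffordAlgebra Q) r := by
    intro m hm y hy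
    have hset : {j : Fin n | m ≤ (j : ℕ)} = (∅ : Set (Fin n)) := by
      ext j
      simp only [Set.mem_setOf_eq, Set.mem_empty_iff_false, iff_false, not_le]
      exact lt_of_lt_of_le j.2 hm
    rw [hset, Set.image_empty, Set.image_empty, Algebra.adjoin_empty, Algebra.mem_bot] at hy
    obtain ⟨r, hr⟩ := hy
    exact ⟨r, hr.symm⟩
  have main : ∀ fuel m : ℕ, n - m ≤ fuel → ∀ y : CliffordAlgebra Q,
      (∀ v, contractLeft (Q := Q) (S v) y = 0) →
      y ∈ Algebra.adjoin F (ι Q '' (b '' {j : Fin n | m ≤ (j : ℕ)})) →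
      ∃ r : F, y = algebraMap F (CliffordAlgebra Q) r := by
    intro fuel
    induction fuel with
    | zero =>
        intro m hle y _ hy
        exact empty_case m (by omega) y hy
    | succ fuel ih =>
        intro m hle y hcy hy
        by_cases hnm : n ≤ m
        · exact empty_case m hnm y hy
        · push_neg at hnm
          set k : Fin n := ⟨m, hnm⟩ with hk
          have hseteq : {j : Fin n | m ≤ (j : ℕ)} = {j : Fin n | k ≤ j} := by
            ext j; simp [Fin.le_def, hk]
          rw [hseteq] at hy
          obtain ⟨a, ha, c, hc, rfl⟩ := decomp S hS hQ b hbo k hy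
          have horth : ∀ w ∈ (b '' {j | k < j} : Set V), S (b k) w = 0 := by
            rintro w ⟨j, hj, rfl⟩
            exact hbo k j (ne_of_lt hj)
          have hcontr := hcy (b k)
          rw [map_add, contract_adjoin_zero _ _ horth ha, zero_add, contractLeft_ι_mul,
            contract_adjoin_zero _ _ horth hc, mul_zero, sub_zero] at hcontr
          have hdiag : S (b k) (b k) ≠ 0 := by
            intro h0
            have hall : ∀ y : V, S (b k) y = 0 := by
              intro y
              have hy' : y ∈ Submodule.span F (Set.range b) := by rw [b.span_eq]; trivial
              induction hy' using Submodule.span_induction with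
              | mem w hw =>
                  obtain ⟨j, rfl⟩ := hw
                  by_cases hj : j = k
                  · rw [hj]; exact h0
                  · exact hbo k j (Ne.symm hj)
              | zero => rw [map_zero]
              | add w₁ w₂ _ _ ih₁ ih₂ => rw [map_add, ih₁, ih₂, add_zero]
              | smul t w _ ihw => rw [map_smul, ihw, smul_zero]
            exact b.ne_zero k (hnd _ hall)
          have hc0 : c = 0 := by
            rcases smul_eq_zero.mp hcontr with h | h
            · exact absurd h hdiag
            · exact h
          rw [hc0, mul_zero, add_zero]
          rw [hc0, mul_zero, add_zero] at hcy
          have hseteq2 : {j : Fin n | k < j} = {j : Fin n | m + 1 ≤ (j : ℕ)} := by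
            ext j; simp only [Set.mem_setOf_eq, Fin.lt_def, hk]; omega
          rw [hseteq2] at ha
          exact ih (m + 1) (by omega) a hcy ha
  have hx0 : x ∈ Algebra.adjoin F (ι Q '' (b '' {j : Fin n | 0 ≤ (j : ℕ)})) := by
    have : {j : Fin n | 0 ≤ (j : ℕ)} = Set.univ := by ext j; simp
    rw [this, Set.image_univ]
    exact mem_adjoin_range b x
  exact main n 0 (by omega) x hx hx0

end Aux

/-- Every element of the Clifford group `Γ(V)` is homogeneous for the ℤ/2-grading:
either `x' = x` (even) or `x' = -x` (odd); hence `Γ(V) = Γ⁰(V) ⊔ Γ¹(V)`. -/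
theorem stmt_4 {F : Type*} [Field F] (hchar : (2 : F) ≠ 0)
    {V : Type*} [AddCommGroup V] [Module F V] [FiniteDimensional F V]
    (S : LinearMap.BilinForm F V) (hS : ∀ x y, S x y = S y x)
    (hnd : ∀ x : V, (∀ y : V, S x y = 0) → x = 0)
    (Q : QuadraticForm F V) (hQ : ∀ v, Q v = -(S v v))
    (u : (CliffordAlgebra Q)ˣ)
    (hu : ∀ v : V, ∃ w : V, (u : CliffordAlgebra Q) * ι Q v *
      involute (↑u⁻¹ : CliffordAlgebra Q) = ι Q w) :
    (involute (u : CliffordAlgebra Q) = (u : CliffordAlgebra Q) ∧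
      ¬ involute (u : CliffordAlgebra Q) = -(u : CliffordAlgebra Q)) ∨
    (involute (u : CliffordAlgebra Q) = -(u : CliffordAlgebra Q) ∧
      ¬ involute (u : CliffordAlgebra Q) = (u : CliffordAlgebra Q)) := by
  letI : Invertible (2 : F) := invertibleOfNonzero hchar
  haveI : Nontrivial (CliffordAlgebra Q) := inferInstance
  set U : CliffordAlgebra Q := (u : CliffordAlgebra Q) with hU
  set Ui : CliffordAlgebra Q := (↑u⁻¹ : CliffordAlgebra Q) with hUi
  have hUUi : U * Ui = 1 := u.mul_inv
  have hUiU : Ui * U = 1 := u.inv_mul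
  -- the two forms of the Clifford group condition
  have key : ∀ v : V, U * ι Q v * involute Ui = involute U * ι Q v * Ui := by
    intro v
    obtain ⟨w, hw⟩ := hu v
    have hw2 := congrArg (involute (Q := Q)) hw
    simp only [map_mul, involute_ι, involute_involute, mul_neg, neg_mul] at hw2
    rw [hw, ← neg_inj, ← hw2]
  set z : CliffordAlgebra Q := Ui * involute U with hz
  set zi : CliffordAlgebra Q := involute Ui * U with hzi
  have hzzi : z * zi = 1 := by
    calc Ui * involute U * (involute Ui * U) = Ui * (involute U * involute Ui) * U := by
          noncomm_ring
      _ = Ui * involute (U * Ui) * U := by rw [map_mul]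
      _ = 1 := by rw [hUUi, map_one, mul_one, hUiU]
  have hziz : zi * z = 1 := by
    calc involute Ui * U * (Ui * involute U) = involute Ui * (U * Ui) * involute U := by
          noncomm_ring
      _ = involute Ui * involute U := by rw [hUUi, mul_one]
      _ = 1 := by rw [← map_mul, hUiU, map_one]
  have hinvzi : involute zi = z := by
    rw [hzi, map_mul, involute_involute, hz]
  -- the twisted commutation relation for `zi`
  have key2 : ∀ v : V, ι Q v * zi = z * ι Q v := by
    intro v
    have h := congrArg (fun t => Ui * t * U) (key v)
    calc ι Q v * zi = (Ui * U) * ι Q v * (involute Ui * U) := by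
          rw [hUiU, one_mul]
      _ = Ui * (U * ι Q v * involute Ui) * U := by noncomm_ring
      _ = Ui * (involute U * ι Q v * Ui) * U := by rw [key v]
      _ = (Ui * involute U) * ι Q v * (Ui * U) := by noncomm_ring
      _ = z * ι Q v := by rw [hUiU, mul_one, hz]
  -- all contractions of `zi` vanish
  have hcontr : ∀ v : V, contractLeft (Q := Q) (S v) zi = 0 := by
    intro v
    have h := iota_mul_eq S hS hQ v zi
    rw [hinvzi, key2 v] at h
    have h2 : (-2 : F) • contractLeft (Q := Q) (S v) zi = 0 := by
      have := h.symm
      rwa [add_eq_left] at this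
    rcases smul_eq_zero.mp h2 with h3 | h3
    · exact absurd h3 (by simpa using hchar)
    · exact h3
  obtain ⟨r, hr⟩ := scalar_of_contract hchar S hS hnd hQ hcontr
  have hzr : z = algebraMap F _ r := by
    rw [← hinvzi, hr, AlgHom.commutes]
  -- `r * r = 1`
  have hinj : Function.Injective (algebraMap F (CliffordAlgebra Q)) := by
    intro s t h
    have h2 := congrArg (equivExterior Q) h
    rw [equivExterior, changeFormEquiv_apply, changeFormEquiv_apply,
      changeForm_algebraMap, changeForm_algebraMap] at h2
    exact (ExteriorAlgebra.algebraMap_inj (M := V) s t).mp h2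
  have hrr : r * r = 1 := by
    apply hinj
    rw [map_mul, map_one]
    nth_rewrite 1 [← hzr]
    rw [← hr, hzzi]
  have hUz : involute U = U * algebraMap F _ r := by
    rw [← hzr, hz, ← mul_assoc, hUUi, one_mul]
  have hUne : U ≠ 0 := u.ne_zero
  rcases mul_self_eq_one_iff.mp hrr with h1 | hm1
  · left
    constructor
    · rw [hUz, h1, map_one, mul_one]
    · intro hcon
      rw [hUz, h1, map_one, mul_one] at hcon
      have : (2 : F) • U = 0 := by
        rw [two_smul]
        nth_rewrite 1 [hcon]
        rw [neg_add_cancel]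
      rcases smul_eq_zero.mp this with h | h
      · exact hchar h
      · exact hUne h
  · right
    constructor
    · rw [hUz, hm1, map_neg, map_one, mul_neg, mul_one]
    · intro hcon
      rw [hUz, hm1, map_neg, map_one, mul_neg, mul_one] at hcon
      have : (2 : F) • U = 0 := by
        rw [two_smul]
        nth_rewrite 2 [← hcon]
        rw [add_neg_cancel]
      rcases smul_eq_zero.mp this with h | h
      · exact hchar h
      · exact hUne h
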